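/- Let n, m be natural numbers and let φ : ZMod (n+1) → ZMod (m+1) be a function that arises as φ_f for some f ∈ ZM(n,m). Then: (1) if φ is not constant, the fiber over φ is a singleton, i.e., any f, g ∈ ZM(n,m) with φ_f = φ_g = φ satisfy f ≈ g; (2) if φ is constant, the set of ≈-classes {[f] ∈ ZM(n,m)/≈ : φ_f = φ} has exactly n+1 elements (it is in bijection with ℤ/(n+1)). -/

import Mathlib

/-- Membership in `ℤMon(ⁿ↺ℤ, ᵐ↺ℤ)`: monotone and equivariant. -/
def InZM (n m : ℕ) (f : ℤ → ℤ) : Prop :=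
  Monotone f ∧ ∀ k : ℤ, f (k + (n + 1)) = f k + (m + 1)

/-- `ℤMon(ⁿ↺ℤ, ᵐ↺ℤ)`: monotone `ℤ`-equivariant maps. -/
abbrev ZM (n m : ℕ) : Type := {f : ℤ → ℤ // InZM n m f}

/-- The `ℤ`-action relation `≈` on `ZM n m`. -/
def ZMrel (n m : ℕ) (f g : ZM n m) : Prop :=
  ∃ c : ℤ, ∀ k : ℤ, g.1 k = f.1 (k + c * ((n : ℤ) + 1))

/-- `f ∈ ZM(n,m)` induces the map of underlying sets `φ : ℤ/(n+1) → ℤ/(m+1)`. -/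
def Inducesφ (n m : ℕ) (f : ZM n m) (φ : ZMod (n + 1) → ZMod (m + 1)) : Prop :=
  ∀ k : ℤ, φ ((k : ZMod (n + 1))) = ((f.1 k : ℤ) : ZMod (m + 1))

lemma zm_shift {n m : ℕ} (f : ZM n m) (c k : ℤ) :
    f.1 (k + c * ((n:ℤ)+1)) = f.1 k + c * ((m:ℤ)+1) := by
  induction c using Int.induction_on with
  | zero => simp
  | succ i ih =>
    have h := f.2.2 (k + (i:ℤ) * ((n:ℤ)+1))
    have e1 : k + ((i:ℤ)+1) * ((n:ℤ)+1) = (k + (i:ℤ) * ((n:ℤ)+1)) + ((n:ℤ)+1) := by ring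
    rw [e1, h, ih]; ring
  | pred i ih =>
    have h := f.2.2 (k + (-(i:ℤ)-1) * ((n:ℤ)+1))
    have e1 : k + (-(i:ℤ)-1) * ((n:ℤ)+1) + ((n:ℤ)+1) = k + (-(i:ℤ)) * ((n:ℤ)+1) := by ring
    rw [e1] at h
    have e2 : k + (-(i:ℤ)) * ((n:ℤ)+1) = k + -(i:ℤ) * ((n:ℤ)+1) := by ring
    rw [e2, ih] at h
    have h3 : f.1 (k + (-(i:ℤ)-1) * ((n:ℤ)+1)) = f.1 k + (-(i:ℤ)-1) * ((m:ℤ)+1) := by linarith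
    exact h3

lemma zm_step_le {n m : ℕ} (f : ZM n m) (k : ℤ) :
    f.1 (k+1) ≤ f.1 k + ((m:ℤ)+1) := by
  have := f.2.1 (show k+1 ≤ k + ((n:ℤ)+1) by have : (0:ℤ) ≤ n := Int.natCast_nonneg n; linarith)
  rw [f.2.2 k] at this; exact this

lemma int_cast_eq_dvd {m : ℕ} {a b : ℤ} (h : ((a : ZMod (m+1)) = (b : ZMod (m+1)))) :
    ((m:ℤ)+1) ∣ (a - b) := by
  have h1 := (ZMod.intCast_eq_intCast_iff _ _ _).mp h
  have h2 := Int.ModEq.dvd h1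
  have h3 : ((m+1:ℕ):ℤ) = (m:ℤ)+1 := by push_cast; ring
  rw [h3] at h2
  have h4 := dvd_neg.mpr h2
  rwa [neg_sub] at h4

lemma dvd_sub_of_induces {n m : ℕ} {φ : ZMod (n + 1) → ZMod (m + 1)} {f g : ZM n m}
    (hf : Inducesφ n m f φ) (hg : Inducesφ n m g φ) (k : ℤ) :
    ((m:ℤ)+1) ∣ (g.1 k - f.1 k) := by
  exact int_cast_eq_dvd (by rw [← hf k, ← hg k])

/-- If `g` has a full jump somewhere, the induced map is constant. -/
lemma const_of_jump {n m : ℕ} {φ : ZMod (n + 1) → ZMod (m + 1)} {g : ZM n m}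
    (hg : Inducesφ n m g φ) (k : ℤ) (hk : g.1 (k+1) = g.1 k + ((m:ℤ)+1)) :
    ∃ c, ∀ x, φ x = c := by
  set N : ℤ := (n:ℤ)+1 with hN
  set M : ℤ := (m:ℤ)+1 with hM
  have hNpos : 0 < N := by positivity
  have hconst : ∀ j, k+1 ≤ j → j ≤ k + N → g.1 j = g.1 (k+1) := by
    intro j h1 h2
    have hup : g.1 j ≤ g.1 (k + N) := g.2.1 h2
    have heq : g.1 (k + N) = g.1 k + M := g.2.2 k
    have hlo : g.1 (k+1) ≤ g.1 j := g.2.1 h1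
    omega
  refine ⟨((g.1 (k+1) : ℤ) : ZMod (m+1)), ?_⟩
  intro x
  obtain ⟨j, rfl⟩ := ZMod.intCast_surjective x
  rw [hg j]
  have : g.1 j ≡ g.1 (k+1) [ZMOD ((m+1:ℕ):ℤ)] := by
    set q : ℤ := (j - (k+1)) / N with hq
    have hbound := Int.emod_nonneg (j - (k+1)) (by omega : N ≠ 0)
    have hlt := Int.emod_lt_of_pos (j - (k+1)) hNpos
    have hdef : j - (k+1) = q * N + (j - (k+1)) % N := by
      rw [hq]; rw [Int.ediv_mul_add_emod]
    set r : ℤ := j - q * N with hr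
    have hr1 : k + 1 ≤ r := by omega
    have hr2 : r ≤ k + N := by omega
    have hgr : g.1 r = g.1 (k+1) := hconst r hr1 hr2
    have hjr : g.1 j = g.1 r + q * M := by
      have := zm_shift g q r
      rw [show r + q * N = j by omega] at this
      rw [this]
    have hMeq : ((m+1:ℕ):ℤ) = M := by push_cast [hM]; ring
    rw [hMeq]
    have hdvd : M ∣ (g.1 (k+1) - g.1 j) := ⟨-q, by rw [hjr, hgr]; ring⟩
    exact Int.modEq_iff_dvd.mpr hdvd
  exact (ZMod.intCast_eq_intCast_iff _ _ _).mpr this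

lemma zmrel_equiv (n m : ℕ) : Equivalence (ZMrel n m) := by
  constructor
  · intro f; exact ⟨0, fun k => by simp⟩
  · rintro f g ⟨c, hc⟩
    refine ⟨-c, fun k => ?_⟩
    rw [hc (k + -c * ((n:ℤ)+1))]
    ring_nf
  · rintro f g h ⟨c1, hc1⟩ ⟨c2, hc2⟩
    refine ⟨c1 + c2, fun k => ?_⟩
    rw [hc2 k, hc1 (k + c2 * ((n:ℤ)+1))]
    ring_nf

/-- Part (1). -/
lemma part1 {n m : ℕ} {φ : ZMod (n + 1) → ZMod (m + 1)} (hnc : ¬ ∃ c, ∀ x, φ x = c)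
    (f g : ZM n m) (hf : Inducesφ n m f φ) (hg : Inducesφ n m g φ) : ZMrel n m f g := by
  have hMpos : (0:ℤ) < (m:ℤ)+1 := by positivity
  have hstep : ∀ k : ℤ, g.1 (k+1) - f.1 (k+1) ≤ g.1 k - f.1 k := by
    intro k
    by_contra hlt
    push_neg at hlt
    obtain ⟨d1, hd1⟩ := dvd_sub_of_induces hf hg k
    obtain ⟨d2, hd2⟩ := dvd_sub_of_induces hf hg (k+1)
    have hd : d1 < d2 := by nlinarith
    have hfmono : f.1 k ≤ f.1 (k+1) := f.2.1 (by omega)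
    have hgle := zm_step_le g k
    have hgmono : g.1 k ≤ g.1 (k+1) := g.2.1 (by omega)
    have hjump : g.1 (k+1) = g.1 k + ((m:ℤ)+1) := by nlinarith
    exact hnc (const_of_jump hg k hjump)
  have hanti : Antitone (fun k : ℤ => g.1 k - f.1 k) := antitone_int_of_succ_le hstep
  have hperQ : ∀ q : ℤ, g.1 (q * ((n:ℤ)+1)) - f.1 (q * ((n:ℤ)+1)) = g.1 0 - f.1 0 := by
    intro q
    have h1 := zm_shift g q 0
    have h2 := zm_shift f q 0
    simp only [zero_add] at h1 h2
    omega
  have hconst : ∀ k : ℤ, g.1 k - f.1 k = g.1 0 - f.1 0 := by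
    intro k
    have hk1 : -(|k|) * ((n:ℤ)+1) ≤ k := by
      have h1 : 0 ≤ |k| := abs_nonneg k
      have h2 : k ≤ |k| := le_abs_self k
      have h3 : -|k| ≤ k := neg_abs_le k
      nlinarith
    have hk2 : k ≤ |k| * ((n:ℤ)+1) := by
      have h1 : 0 ≤ |k| := abs_nonneg k
      have h2 : k ≤ |k| := le_abs_self k
      nlinarith
    have hu := hanti hk1
    have hl := hanti hk2
    have e1 := hperQ (-(|k|))
    have e2 := hperQ (|k|)
    simp only at hu hl
    omega
  obtain ⟨c, hc⟩ := dvd_sub_of_induces hf hg 0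
  refine ⟨c, fun k => ?_⟩
  have := zm_shift f c k
  rw [this]
  linarith [hconst k, hc]

/-- The canonical step functions. -/
def Ffun (n m : ℕ) (t a : ℤ) : ℤ → ℤ := fun k => t + ((m:ℤ)+1) * ((k + a) / ((n:ℤ)+1))

lemma Ffun_mem (n m : ℕ) (t a : ℤ) : InZM n m (Ffun n m t a) := by
  constructor
  · intro k k' hk
    have h := Int.ediv_le_ediv (by positivity : (0:ℤ) < (n:ℤ)+1)
      (by omega : k + a ≤ k' + a)
    have hM : (0:ℤ) ≤ (m:ℤ)+1 := by positivity
    unfold Ffun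
    nlinarith
  · intro k
    show t + ((m:ℤ)+1) * ((k + ((n:ℤ)+1) + a) / ((n:ℤ)+1)) = _
    rw [show k + ((n:ℤ)+1) + a = (k + a) + 1 * ((n:ℤ)+1) from by ring,
      Int.add_mul_ediv_right _ _ (by omega : ((n:ℤ)+1) ≠ 0)]
    show _ = t + ((m:ℤ)+1) * ((k + a) / ((n:ℤ)+1)) + ((m:ℤ)+1)
    ring

/-- The canonical step functions as elements of `ZM`. -/
def FF (n m : ℕ) (t : ℤ) (a : ℕ) : ZM n m := ⟨Ffun n m t a, Ffun_mem n m t a⟩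

lemma neg_ediv_eq {N e : ℤ} (h1 : 0 < e) (h2 : e < N) : (-e) / N = -1 := by
  rw [show -e = (N - e) + (-1) * N from by ring,
    Int.add_mul_ediv_right _ _ (by omega : N ≠ 0),
    Int.ediv_eq_zero_of_lt (by omega) (by omega)]
  norm_num

lemma FF_inj {n m : ℕ} {t : ℤ} {a b : ℕ} (ha : a ≤ n) (hb : b ≤ n)
    (h : ZMrel n m (FF n m t a) (FF n m t b)) : a = b := by
  obtain ⟨c, hc⟩ := h
  have hMne : ((m:ℤ)+1) ≠ 0 := by positivity
  have hNne : ((n:ℤ)+1) ≠ 0 := by positivity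
  have key : ∀ k : ℤ, (k + (b:ℤ)) / ((n:ℤ)+1) = (k + (a:ℤ)) / ((n:ℤ)+1) + c := by
    intro k
    have h1 := hc k
    have h2 : (FF n m t a).1 (k + c * ((n:ℤ)+1)) =
        t + ((m:ℤ)+1) * ((k + (a:ℤ)) / ((n:ℤ)+1) + c) := by
      show t + ((m:ℤ)+1) * ((k + c * ((n:ℤ)+1) + a) / ((n:ℤ)+1)) = _
      rw [show k + c * ((n:ℤ)+1) + a = (k + (a:ℤ)) + c * ((n:ℤ)+1) from by ring,
        Int.add_mul_ediv_right _ _ hNne]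
    rw [h2] at h1
    have h0 : (FF n m t b).1 k = t + ((m:ℤ)+1) * ((k + (b:ℤ)) / ((n:ℤ)+1)) := rfl
    rw [h0] at h1
    have h3 : ((m:ℤ)+1) * ((k + (b:ℤ)) / ((n:ℤ)+1)) =
        ((m:ℤ)+1) * ((k + (a:ℤ)) / ((n:ℤ)+1) + c) := by linarith
    exact mul_left_cancel₀ hMne h3
  have k1 := key (-(a:ℤ))
  have k2 := key (-(b:ℤ))
  rw [show -(a:ℤ) + (a:ℤ) = 0 from by ring] at k1
  rw [show -(b:ℤ) + (b:ℤ) = 0 from by ring] at k2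
  simp only [Int.zero_ediv] at k1 k2
  rcases lt_trichotomy (a:ℤ) (b:ℤ) with hlt | heq | hgt
  · exfalso
    have e1 : (-(a:ℤ) + (b:ℤ)) / ((n:ℤ)+1) = 0 :=
      Int.ediv_eq_zero_of_lt (by omega) (by omega)
    have e2 : (-(b:ℤ) + (a:ℤ)) / ((n:ℤ)+1) = -1 := by
      rw [show -(b:ℤ) + (a:ℤ) = -((b:ℤ) - (a:ℤ)) from by ring]
      exact neg_ediv_eq (by omega) (by omega)
    omega
  · exact_mod_cast heq
  · exfalso
    have e1 : (-(b:ℤ) + (a:ℤ)) / ((n:ℤ)+1) = 0 :=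
      Int.ediv_eq_zero_of_lt (by omega) (by omega)
    have e2 : (-(a:ℤ) + (b:ℤ)) / ((n:ℤ)+1) = -1 := by
      rw [show -(a:ℤ) + (b:ℤ) = -((a:ℤ) - (b:ℤ)) from by ring]
      exact neg_ediv_eq (by omega) (by omega)
    omega

lemma fiber_surj {n m : ℕ} (t : ℤ) (f : ZM n m)
    (hdvd : ∀ k : ℤ, ((m:ℤ)+1) ∣ (f.1 k - t)) :
    ∃ a : ℕ, a ≤ n ∧ ZMrel n m (FF n m t a) f := by
  have hMpos : (0:ℤ) < (m:ℤ)+1 := by positivity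
  have hNpos : (0:ℤ) < (n:ℤ)+1 := by positivity
  set N : ℤ := (n:ℤ)+1 with hN
  set M : ℤ := (m:ℤ)+1 with hM
  set d : ℤ → ℤ := fun k => (f.1 k - t) / M with hd
  have hfd : ∀ k, f.1 k = t + M * d k := by
    intro k
    have := Int.ediv_mul_cancel (hdvd k)
    simp only [hd]
    linarith
  have hdmono : ∀ j k : ℤ, j ≤ k → d j ≤ d k := by
    intro j k hjk
    exact Int.ediv_le_ediv hMpos (by have := f.2.1 hjk; omega)
  have hdshift : ∀ (k q : ℤ), d (k + q * N) = d k + q := by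
    intro k q
    have h1 := zm_shift f q k
    simp only [hd]
    rw [h1, show f.1 k + q * M - t = (f.1 k - t) + q * M from by ring,
      Int.add_mul_ediv_right _ _ (by omega : M ≠ 0)]
  set c0 : ℤ := d 0 with hc0
  set P : ℕ → Prop := fun j => d (j:ℤ) = c0 with hP
  haveI hdec : DecidablePred P := fun j => by unfold P; infer_instance
  set A : ℕ := Nat.findGreatest P n with hA
  have hPA : P A := Nat.findGreatest_spec (Nat.zero_le n) (show P 0 by simp [hP, hc0])
  have hAle : A ≤ n := Nat.findGreatest_le n
  have hdN : d N = c0 + 1 := by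
    have := hdshift 0 1
    simpa using this
  have hA1 : d ((A:ℤ)+1) = c0 + 1 := by
    have hub : d ((A:ℤ)+1) ≤ c0 + 1 := by
      rw [← hdN]; exact hdmono _ _ (by push_cast [hN]; omega)
    have hlb : c0 ≤ d ((A:ℤ)+1) := by
      rw [show c0 = d (A:ℤ) from hPA.symm]
      exact hdmono _ _ (by omega)
    rcases Nat.lt_or_ge A n with hlt | hge
    · have hne : ¬ P (A+1) := Nat.findGreatest_is_greatest
        (show Nat.findGreatest P n < A + 1 by omega) (show A + 1 ≤ n by omega)
      have : d ((A+1:ℕ):ℤ) ≠ c0 := hne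
      push_cast at this
      omega
    · have : A = n := by omega
      rw [this]
      have : ((n:ℤ)+1) = N := by rw [hN]
      rw [this, hdN]
  have key : ∀ k : ℤ, d k = c0 + (k + (N - 1 - (A:ℤ))) / N := by
    intro k
    set q : ℤ := (k + (N - 1 - (A:ℤ))) / N with hq
    have hbound := Int.emod_nonneg (k + (N - 1 - (A:ℤ))) (by omega : N ≠ 0)
    have hlt := Int.emod_lt_of_pos (k + (N - 1 - (A:ℤ))) hNpos
    have hdef : k + (N - 1 - (A:ℤ)) = q * N + (k + (N - 1 - (A:ℤ))) % N := by
      rw [hq, Int.ediv_mul_add_emod]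
    set r : ℤ := k - q * N with hr
    have hr1 : (A:ℤ) + 1 - N ≤ r := by omega
    have hr2 : r ≤ (A:ℤ) := by omega
    have hlow : d ((A:ℤ) + 1 - N) = c0 := by
      have := hdshift ((A:ℤ)+1) (-1)
      rw [show (A:ℤ) + 1 + (-1) * N = (A:ℤ) + 1 - N from by ring] at this
      rw [this, hA1]; ring
    have hdr : d r = c0 := by
      have h1 : d r ≤ d (A:ℤ) := hdmono _ _ hr2
      have h2 : d ((A:ℤ)+1-N) ≤ d r := hdmono _ _ hr1
      have h3 : d (A:ℤ) = c0 := hPA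
      omega
    have : d k = d r + q := by
      rw [show k = r + q * N from by omega, hdshift]
    omega
  refine ⟨n - A, by omega, ⟨c0, fun k => ?_⟩⟩
  have hcast : ((n - A : ℕ) : ℤ) = N - 1 - (A:ℤ) := by push_cast [hN, hAle]; ring
  show f.1 k = t + M * ((k + c0 * N + ((n - A : ℕ) : ℤ)) / N)
  rw [hcast, show k + c0 * N + (N - 1 - (A:ℤ)) = (k + (N - 1 - (A:ℤ))) + c0 * N from by ring,
    Int.add_mul_ediv_right _ _ (by omega : N ≠ 0), hfd k, key k]
  ring

/-- Fibers of the underlying-set map `U : Hom_Λ(⟨n⟩,⟨m⟩) → Cyc(n̲,m̲)`: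
(1) if `φ` is non-constant, the fiber over `φ` is a singleton;
(2) if `φ` is constant, the fiber has exactly `n+1` elements. -/
theorem stmt_6 (n m : ℕ) (φ : ZMod (n + 1) → ZMod (m + 1))
    (hφ : ∃ f : ZM n m, Inducesφ n m f φ) :
    ((¬ ∃ c, ∀ x, φ x = c) →
      ∀ f g : ZM n m, Inducesφ n m f φ → Inducesφ n m g φ → ZMrel n m f g) ∧
    ((∃ c, ∀ x, φ x = c) →
      Nat.card {q : Quot (ZMrel n m) //
        ∃ f : ZM n m, Inducesφ n m f φ ∧ Quot.mk (ZMrel n m) f = q} = n + 1) := by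
  constructor
  · intro hnc f g hf hg
    exact part1 hnc f g hf hg
  · rintro ⟨c, hc⟩
    obtain ⟨f0, hf0⟩ := hφ
    set t : ℤ := f0.1 0 with ht
    have htc : ((t : ℤ) : ZMod (m+1)) = c := by rw [← hc ((0:ℤ) : ZMod (n+1)), hf0 0]
    have hdvd : ∀ (f : ZM n m), Inducesφ n m f φ → ∀ k : ℤ, ((m:ℤ)+1) ∣ (f.1 k - t) := by
      intro f hf k
      apply int_cast_eq_dvd
      rw [← hf k, hc, htc]
    have hMzero : (((m:ℤ)+1 : ℤ) : ZMod (m+1)) = 0 := by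
      have := ZMod.natCast_self (m+1)
      push_cast at this ⊢
      exact_mod_cast this
    have hMzero' : ((m : ZMod (m+1)) + 1) = 0 := by
      exact_mod_cast ZMod.natCast_self (m+1)
    have hFind : ∀ a : ℕ, Inducesφ n m (FF n m t a) φ := by
      intro a k
      rw [hc]
      have hcast : (((FF n m t a).1 k : ℤ) : ZMod (m+1)) = ((t : ℤ) : ZMod (m+1)) := by
        have h0 : (FF n m t a).1 k = t + ((m:ℤ)+1) * ((k + (a:ℤ)) / ((n:ℤ)+1)) := rfl
        rw [h0]
        push_cast
        rw [hMzero']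
        ring
      rw [hcast, htc]
    set ψ : ZMod (n+1) → {q : Quot (ZMrel n m) //
        ∃ f : ZM n m, Inducesφ n m f φ ∧ Quot.mk (ZMrel n m) f = q} :=
      fun x => ⟨Quot.mk (ZMrel n m) (FF n m t x.val), FF n m t x.val, hFind x.val, rfl⟩ with hψ
    have hbij : Function.Bijective ψ := by
      constructor
      · intro x y hxy
        have hq : Quot.mk (ZMrel n m) (FF n m t x.val) = Quot.mk (ZMrel n m) (FF n m t y.val) :=
          congrArg Subtype.val hxy
        have hrel : ZMrel n m (FF n m t x.val) (FF n m t y.val) :=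
          ((zmrel_equiv n m).eqvGen_iff).mp (Quot.eq.mp hq)
        have hx : x.val ≤ n := by have := ZMod.val_lt x; omega
        have hy : y.val ≤ n := by have := ZMod.val_lt y; omega
        exact ZMod.val_injective _ (FF_inj hx hy hrel)
      · rintro ⟨q, f, hfInd, hfq⟩
        obtain ⟨a, han, hrel⟩ := fiber_surj t f (hdvd f hfInd)
        refine ⟨(a : ZMod (n+1)), ?_⟩
        apply Subtype.ext
        show Quot.mk (ZMrel n m) (FF n m t ((a : ZMod (n+1)).val)) = q
        rw [ZMod.val_cast_of_lt (by omega : a < n+1), ← hfq]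
        exact Quot.sound hrel
    rw [← Nat.card_eq_of_bijective ψ hbij]
    simp [Nat.card_eq_fintype_card, ZMod.card]
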